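/- Norm scalings of the finite-difference Hamiltonians and their commutators: in the finite-difference setting (with V 1-periodic and twice continuously differentiable), for every n ≥ 3: ‖H1‖ ≤ 4n², ‖D1‖ ≤ 2n, ‖H2‖ ≤ sup_{x∈[0,1]} |V(x)|, ‖[H1,H2]‖ ≤ 2n · sup_{x∈[0,1]} |V'(x)|, ‖[H2,[H2,H1]]‖ ≤ 4n · sup_{x∈[0,1]} |V(x)| · sup_{x∈[0,1]} |V'(x)|, and ‖[H1,[H1,H2]]‖ ≤ 4n² · sup_{x∈[0,1]} |V''(x)|, where ‖·‖ is the spectral (operator 2-) norm. -/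

import Mathlib

open scoped Matrix.Norms.L2Operator
open Matrix

noncomputable section

/-- Square `n × n` complex matrices. -/
abbrev Mat (n : ℕ) := Matrix (Fin n) (Fin n) ℂ

/-- The commutator `[A,B] = AB - BA`. -/
def matComm {n : ℕ} (A B : Mat n) : Mat n := A * B - B * A

/-- The `n×n` periodic central finite-difference discretization of `-Δ` on `[0,1]`:
`(H1)_{kk} = 2n²`, `(H1)_{k,k+1 mod n} = (H1)_{k,k-1 mod n} = -n²`, all other entries `0`. -/
noncomputable def fdH1 (n : ℕ) : Mat n :=
  Matrix.of fun k l : Fin n =>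
    if (l : ℕ) = (k : ℕ) then 2 * (n : ℂ)^2
    else if (l : ℕ) = ((k : ℕ) + 1) % n ∨ (l : ℕ) = ((k : ℕ) + n - 1) % n then -(n : ℂ)^2
    else 0

/-- The diagonal potential matrix `H2 = diag(V(0), V(1/n), …, V((n-1)/n))`. -/
noncomputable def fdH2 (n : ℕ) (V : ℝ → ℝ) : Mat n :=
  Matrix.diagonal fun k : Fin n => ((V (((k : ℕ) : ℝ) / (n : ℝ))) : ℂ)

/-- The difference matrix: `(D1)_{kk} = -n`, `(D1)_{k,k-1 mod n} = n`, all other entries `0`. -/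
noncomputable def fdD1 (n : ℕ) : Mat n :=
  Matrix.of fun k l : Fin n =>
    if (l : ℕ) = (k : ℕ) then -(n : ℂ)
    else if (l : ℕ) = ((k : ℕ) + n - 1) % n then (n : ℂ)
    else 0

namespace FDaux

/-! ### Permutation matrices -/

def pm {n : ℕ} (e : Equiv.Perm (Fin n)) : Mat n := Matrix.of fun k l => if l = e k then 1 else 0

variable {n : ℕ}

lemma pm_mul_pm (e f : Equiv.Perm (Fin n)) : pm e * pm f = pm (e.trans f) := by
  ext k l
  simp only [pm, Matrix.mul_apply, Matrix.of_apply, Equiv.trans_apply, ite_mul, one_mul, zero_mul]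
  rw [Finset.sum_ite_eq' Finset.univ (e k) (fun x => if l = f x then (1:ℂ) else 0)]
  simp
  by_cases h : l = f (e k) <;> simp [pm, h]

lemma pm_refl : pm (Equiv.refl (Fin n)) = (1 : Mat n) := by
  ext k l
  simp [pm, Matrix.one_apply, eq_comm]

lemma pm_conjTranspose (e : Equiv.Perm (Fin n)) : (pm e)ᴴ = pm e.symm := by
  ext k l
  simp [pm, Matrix.conjTranspose_apply, apply_ite (starRingEnd ℂ), Equiv.eq_symm_apply, eq_comm]

lemma pm_mul_diagonal (e : Equiv.Perm (Fin n)) (d : Fin n → ℂ) :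
    pm e * Matrix.diagonal d = Matrix.diagonal (fun k => d (e k)) * pm e := by
  ext k l
  simp only [pm, Matrix.mul_apply, Matrix.of_apply, Matrix.diagonal_apply, ite_mul, one_mul,
    zero_mul, mul_ite, mul_zero, mul_one]
  have hL : (∑ x, if x = l then (if x = e k then d x else 0) else 0)
      = if l = e k then d l else 0 := by
    rw [Finset.sum_ite_eq' Finset.univ l (fun x => if x = e k then d x else 0)]
    simp
  have hR : (∑ x, if l = e x then (if k = x then d (e k) else 0) else 0)
      = if l = e k then d (e k) else 0 := by
    have : ∀ x : Fin n, (if l = e x then (if k = x then d (e k) else 0) else 0)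
        = if x = k then (if l = e k then d (e k) else 0) else 0 := by
      intro x
      by_cases h : x = k
      · subst h; simp
      · rw [if_neg h]
        by_cases h2 : l = e x
        · rw [if_pos h2, if_neg (fun hh : k = x => h hh.symm)]
        · rw [if_neg h2]
    rw [Finset.sum_congr rfl fun x _ => this x,
      Finset.sum_ite_eq' Finset.univ k (fun _ => if l = e k then d (e k) else 0)]
    simp
  rw [hL, hR]
  by_cases h : l = e k <;> simp [h]

lemma norm_pm [NeZero n] (e : Equiv.Perm (Fin n)) : ‖pm e‖ = 1 := by
  have h1 : (pm e)ᴴ * pm e = 1 := by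
    rw [pm_conjTranspose, pm_mul_pm, Equiv.symm_trans_self, pm_refl]
  have h2 := Matrix.l2_opNorm_conjTranspose_mul_self (pm e)
  rw [h1] at h2
  have h3 : ‖(1 : Mat n)‖ = 1 := CStarRing.norm_one
  rw [h3] at h2
  nlinarith [norm_nonneg (pm e)]

/-! ### Norm of a diagonal matrix -/

lemma l2_norm_diagonal_le (d : Fin n → ℂ) (c : ℝ) (hc : 0 ≤ c) (h : ∀ k, ‖d k‖ ≤ c) :
    ‖Matrix.diagonal d‖ ≤ c := by
  rw [Matrix.l2_opNorm_def]
  apply ContinuousLinearMap.opNorm_le_bound _ hc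
  intro x
  show ‖(WithLp.equiv 2 _).symm (Matrix.diagonal d *ᵥ (WithLp.equiv 2 _) x)‖ ≤ c * ‖x‖
  rw [EuclideanSpace.norm_eq, EuclideanSpace.norm_eq]
  have key : ∑ i, ‖((WithLp.equiv 2 _).symm (Matrix.diagonal d *ᵥ (WithLp.equiv 2 _) x) :
        EuclideanSpace ℂ (Fin n)) i‖ ^ 2 ≤ c ^ 2 * ∑ i, ‖x i‖ ^ 2 := by
    rw [Finset.mul_sum]
    apply Finset.sum_le_sum
    intro i _
    have hi : ((WithLp.equiv 2 _).symm (Matrix.diagonal d *ᵥ (WithLp.equiv 2 _) x) :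
        EuclideanSpace ℂ (Fin n)) i = d i * x i := by
      simp [Matrix.mulVec_diagonal]
    rw [hi, norm_mul, mul_pow]
    have hd2 : ‖d i‖^2 ≤ c^2 := by nlinarith [norm_nonneg (d i), h i]
    exact mul_le_mul_of_nonneg_right hd2 (by positivity)
  calc Real.sqrt (∑ i, ‖((WithLp.equiv 2 _).symm (Matrix.diagonal d *ᵥ (WithLp.equiv 2 _) x) :
        EuclideanSpace ℂ (Fin n)) i‖ ^ 2)
      ≤ Real.sqrt (c ^ 2 * ∑ i, ‖x i‖ ^ 2) := Real.sqrt_le_sqrt key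
    _ = c * Real.sqrt (∑ i, ‖x i‖ ^ 2) := by
        rw [Real.sqrt_mul (by positivity), Real.sqrt_sq hc]

lemma norm_term_le [NeZero n] (c : ℂ) (g : Fin n → ℂ) (e : Equiv.Perm (Fin n)) (b : ℝ)
    (hb : 0 ≤ b) (hg : ∀ k, ‖g k‖ ≤ b) : ‖c • (Matrix.diagonal g * pm e)‖ ≤ ‖c‖ * b := by
  rw [norm_smul]
  have h1 : ‖Matrix.diagonal g * pm e‖ ≤ b := by
    calc ‖Matrix.diagonal g * pm e‖ ≤ ‖Matrix.diagonal g‖ * ‖pm e‖ := norm_mul_le _ _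
      _ = ‖Matrix.diagonal g‖ := by rw [norm_pm, mul_one]
      _ ≤ b := l2_norm_diagonal_le g b hb hg
  exact mul_le_mul_of_nonneg_left h1 (norm_nonneg c)

/-! ### Analytic lemmas -/

lemma periodic_abs_le (f : ℝ → ℝ) (hper : Function.Periodic f 1) (hf : Continuous f) (x : ℝ) :
    |f x| ≤ ⨆ y : Set.Icc (0:ℝ) 1, |f y| := by
  have hbdd : BddAbove (Set.range fun y : Set.Icc (0:ℝ) 1 => |f y|) := by
    have himg : BddAbove ((fun y => |f y|) '' Set.Icc (0:ℝ) 1) :=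
      (isCompact_Icc.image hf.abs).bddAbove
    rwa [← Set.range_restrict] at himg
  have hfx : f x = f (Int.fract x) := by
    have := hper.sub_int_mul_eq (x := x) ⌊x⌋
    simp only [mul_one] at this
    rw [← this]
    rfl
  have hmem : Int.fract x ∈ Set.Icc (0:ℝ) 1 :=
    ⟨Int.fract_nonneg x, le_of_lt (Int.fract_lt_one x)⟩
  rw [hfx]
  exact le_ciSup hbdd ⟨Int.fract x, hmem⟩

lemma periodic_deriv (f : ℝ → ℝ) (hper : Function.Periodic f 1) :
    Function.Periodic (deriv f) 1 := by
  intro x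
  have hfun : (fun y => f (y + 1)) = f := funext fun y => hper y
  calc deriv f (x + 1) = deriv (fun y => f (y + 1)) x := (deriv_comp_add_const f 1 x).symm
    _ = deriv f x := by rw [hfun]

lemma lip_of_deriv_le (f : ℝ → ℝ) (hf : Differentiable ℝ f) (C : ℝ)
    (hC : ∀ x, |deriv f x| ≤ C) (a b : ℝ) : |f a - f b| ≤ C * |a - b| := by
  have := Convex.norm_image_sub_le_of_norm_deriv_le (𝕜 := ℝ) (f := f) (s := Set.univ)
    (fun x _ => (hf x)) (fun x _ => by simpa [Real.norm_eq_abs] using hC x)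
    convex_univ (Set.mem_univ b) (Set.mem_univ a)
  simpa [Real.norm_eq_abs] using this

lemma second_diff_bound (f : ℝ → ℝ) (hf : Differentiable ℝ f)
    (hf' : Differentiable ℝ (deriv f)) (C : ℝ)
    (hC : ∀ x, |deriv (deriv f) x| ≤ C) (x h : ℝ) (hh : 0 ≤ h) :
    |f (x + h) - 2 * f x + f (x - h)| ≤ C * h ^ 2 := by
  set g : ℝ → ℝ := fun t => f (t + h) - f t with hg
  have hgd : Differentiable ℝ g := (hf.comp (differentiable_id.add_const h)).sub hf
  have hderiv : ∀ t, deriv g t = deriv f (t + h) - deriv f t := by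
    intro t
    have h1 : deriv (fun t => f (t + h)) t = deriv f (t + h) := deriv_comp_add_const f h t
    rw [hg]
    have hd1 : DifferentiableAt ℝ (fun s => f (s + h)) t :=
      DifferentiableAt.comp t (hf (t + h)) (differentiableAt_id.add_const h)
    rw [deriv_fun_sub hd1 (hf t), h1]
  have hlip' : ∀ a b, |deriv f a - deriv f b| ≤ C * |a - b| :=
    lip_of_deriv_le (deriv f) hf' C hC
  have hgbound : ∀ t, |deriv g t| ≤ C * h := by
    intro t
    rw [hderiv t]
    calc |deriv f (t + h) - deriv f t| ≤ C * |t + h - t| := hlip' _ _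
      _ = C * h := by rw [show t + h - t = h by ring, abs_of_nonneg hh]
  have key : |g x - g (x - h)| ≤ C * h * |x - (x - h)| :=
    lip_of_deriv_le g hgd (C * h) hgbound x (x - h)
  have hEq : f (x + h) - 2 * f x + f (x - h) = g x - g (x - h) := by
    simp only [hg]
    ring_nf
  rw [hEq]
  calc |g x - g (x - h)| ≤ C * h * |x - (x - h)| := key
    _ = C * h ^ 2 := by rw [show x - (x - h) = h by ring, abs_of_nonneg hh]; ring

lemma contdiff_facts (V : ℝ → ℝ) (hV : ContDiff ℝ 2 V) :
    Differentiable ℝ V ∧ Differentiable ℝ (deriv V) ∧ Continuous (deriv V) ∧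
      Continuous (deriv (deriv V)) ∧ iteratedDeriv 2 V = deriv (deriv V) := by
  have hd : ContDiff ℝ 1 (deriv V) := by
    have h := contDiff_succ_iff_deriv (𝕜 := ℝ) (n := 1) (f := V)
    rw [show ((1:WithTop ℕ∞) + 1) = 2 from by norm_num] at h
    exact (h.mp hV).2.2
  refine ⟨hV.differentiable (by norm_num), hd.differentiable one_ne_zero, hd.continuous,
    hd.continuous_deriv le_rfl, ?_⟩
  rw [iteratedDeriv_succ, iteratedDeriv_one]

/-! ### Fin index arithmetic and decompositions -/

variable [NeZero n]

lemma mod_succ (a : ℕ) (ha : a < n) :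
    (a + 1) % n = if a + 1 = n then 0 else a + 1 := by
  split
  · next h => rw [h, Nat.mod_self]
  · next h => exact Nat.mod_eq_of_lt (by omega)

lemma mod_pred (a : ℕ) (hn : 3 ≤ n) (ha : a < n) :
    (a + n - 1) % n = if a = 0 then n - 1 else a - 1 := by
  split
  · next h =>
      subst h
      simp only [Nat.zero_add]
      exact Nat.mod_eq_of_lt (by omega)
  · next h =>
      have h2 : a + n - 1 = (a - 1) + n := by omega
      rw [h2, Nat.add_mod_right]
      exact Nat.mod_eq_of_lt (by omega)

lemma val_add_one (k : Fin n) : ((k + 1 : Fin n) : ℕ) = ((k : ℕ) + 1) % n := by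
  rw [Fin.val_add, Fin.val_one', Nat.add_mod_mod]

lemma val_sub_one (k : Fin n) (hn : 3 ≤ n) : ((k - 1 : Fin n) : ℕ) = ((k : ℕ) + n - 1) % n := by
  rw [Fin.sub_def]
  simp only [Fin.val_one']
  rw [Nat.mod_eq_of_lt (show 1 < n by omega)]
  congr 1
  omega

/-- The upward cyclic shift permutation `k ↦ k + 1`. -/
def sig (n : ℕ) [NeZero n] : Equiv.Perm (Fin n) := Equiv.addRight 1

lemma sig_apply (k : Fin n) : sig n k = k + 1 := rfl

lemma sig_symm_apply (k : Fin n) : (sig n).symm k = k - 1 := by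
  simp [sig, Equiv.addRight_symm, sub_eq_add_neg]

lemma fdH1_eq (hn : 3 ≤ n) :
    fdH1 n = (2 * (n : ℂ)^2) • (1 : Mat n) - (n : ℂ)^2 • pm (sig n)
      - (n : ℂ)^2 • pm (sig n).symm := by
  ext k l
  have hk := k.isLt
  have hl := l.isLt
  have e1 := mod_succ (n := n) (k : ℕ) hk
  have e2 := mod_pred (n := n) (k : ℕ) hn hk
  have hA : (k = l) ↔ ((l : ℕ) = (k : ℕ)) := by rw [eq_comm, Fin.ext_iff]
  have hB : (l = k + 1) ↔ ((l : ℕ) = ((k : ℕ) + 1) % n) := by rw [Fin.ext_iff, val_add_one]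
  have hC : (l = k - 1) ↔ ((l : ℕ) = ((k : ℕ) + n - 1) % n) := by
    rw [Fin.ext_iff, val_sub_one k hn]
  simp only [fdH1, pm, Matrix.of_apply, Matrix.sub_apply, Matrix.smul_apply, Matrix.one_apply,
    sig_apply, sig_symm_apply, smul_eq_mul, mul_ite, mul_one, mul_zero, hA, hB, hC]
  rw [e1, e2]
  split_ifs <;> (first | ring1 | (exfalso; omega))

lemma fdD1_eq (hn : 3 ≤ n) :
    fdD1 n = (-(n : ℂ)) • (1 : Mat n) + (n : ℂ) • pm (sig n).symm := by
  ext k l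
  have hk := k.isLt
  have hl := l.isLt
  have e2 := mod_pred (n := n) (k : ℕ) hn hk
  have hA : (k = l) ↔ ((l : ℕ) = (k : ℕ)) := by rw [eq_comm, Fin.ext_iff]
  have hC : (l = k - 1) ↔ ((l : ℕ) = ((k : ℕ) + n - 1) % n) := by
    rw [Fin.ext_iff, val_sub_one k hn]
  simp only [fdD1, pm, Matrix.of_apply, Matrix.add_apply, Matrix.smul_apply, Matrix.one_apply,
    sig_symm_apply, smul_eq_mul, mul_ite, mul_one, mul_zero, hA, hC]
  rw [e2]
  split_ifs <;> (first | ring1 | (exfalso; omega))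

/-! ### Commutator algebra -/

lemma diag_comm_pm (e : Equiv.Perm (Fin n)) (d : Fin n → ℂ) :
    Matrix.diagonal d * pm e - pm e * Matrix.diagonal d
      = Matrix.diagonal (fun k => d k - d (e k)) * pm e := by
  rw [pm_mul_diagonal, ← sub_mul]
  congr 1
  rw [← Matrix.diagonal_sub]

lemma matComm_add_right (A B C : Mat n) : matComm A (B + C) = matComm A B + matComm A C := by
  simp only [matComm, mul_add, add_mul]
  abel

lemma matComm_smul_right (c : ℂ) (A B : Mat n) : matComm A (c • B) = c • matComm A B := by
  simp only [matComm, mul_smul_comm, smul_mul_assoc, smul_sub]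

lemma matComm_neg_right (A B : Mat n) : matComm A (-B) = -matComm A B := by
  simp only [matComm, mul_neg, neg_mul]
  abel

lemma matComm_antisymm (A B : Mat n) : matComm A B = -matComm B A := by
  simp only [matComm, neg_sub]

lemma matComm_sub_left (A B C : Mat n) : matComm (A - B) C = matComm A C - matComm B C := by
  simp only [matComm, sub_mul, mul_sub]
  abel

lemma matComm_smul_left (c : ℂ) (A B : Mat n) : matComm (c • A) B = c • matComm A B := by
  simp only [matComm, smul_mul_assoc, mul_smul_comm, smul_sub]

lemma matComm_smul_one_left (c : ℂ) (B : Mat n) : matComm (c • (1 : Mat n)) B = 0 := by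
  simp [matComm]

/-- Commutator of `fdH1` with a diagonal matrix. -/
lemma commH1diag (hn : 3 ≤ n) (d : Fin n → ℂ) :
    matComm (fdH1 n) (Matrix.diagonal d) =
      (n:ℂ)^2 • (Matrix.diagonal (fun k => d k - d (sig n k)) * pm (sig n)) +
      (n:ℂ)^2 • (Matrix.diagonal (fun k => d k - d ((sig n).symm k)) * pm (sig n).symm) := by
  rw [← diag_comm_pm (sig n) d, ← diag_comm_pm (sig n).symm d, matComm, fdH1_eq hn]
  simp only [sub_mul, mul_sub, smul_mul_assoc, mul_smul_comm, one_mul, mul_one, smul_sub]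
  abel

/-- Commutator of a diagonal matrix with `diagonal g * pm e`. -/
lemma comm_diag_diagpm (d g : Fin n → ℂ) (e : Equiv.Perm (Fin n)) :
    matComm (Matrix.diagonal d) (Matrix.diagonal g * pm e)
      = Matrix.diagonal (fun k => g k * (d k - d (e k))) * pm e := by
  rw [matComm, ← mul_assoc, Matrix.diagonal_mul_diagonal, mul_assoc, pm_mul_diagonal,
    ← mul_assoc, Matrix.diagonal_mul_diagonal, ← sub_mul, Matrix.diagonal_sub]
  have hfun : (fun i => d i * g i - g i * d (e i)) = (fun k => g k * (d k - d (e k))) := by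
    funext k; ring
  rw [hfun]

/-- Commutator of a permutation matrix with `diagonal g * pm f` for commuting `pm`s. -/
lemma comm_pm_diagpm (e f : Equiv.Perm (Fin n)) (g : Fin n → ℂ)
    (hef : pm (n := n) e * pm f = pm f * pm e) :
    matComm (pm e) (Matrix.diagonal g * pm f)
      = Matrix.diagonal (fun k => g (e k) - g k) * (pm e * pm f) := by
  rw [matComm, ← mul_assoc, pm_mul_diagonal, mul_assoc (Matrix.diagonal fun k => g (e k)),
    mul_assoc (Matrix.diagonal g), ← hef, ← sub_mul, Matrix.diagonal_sub]

end FDaux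

open FDaux

/-- **Norm scalings of the finite-difference Hamiltonians and their commutators** with
respect to the spectral (operator 2-) norm. -/
theorem finite_difference_norm_scalings
    (n : ℕ) (hn : 3 ≤ n) (V : ℝ → ℝ)
    (hVper : Function.Periodic V 1) (hV : ContDiff ℝ 2 V) :
    ‖fdH1 n‖ ≤ 4 * (n : ℝ)^2 ∧
    ‖fdD1 n‖ ≤ 2 * (n : ℝ) ∧
    ‖fdH2 n V‖ ≤ (⨆ x : Set.Icc (0:ℝ) 1, |V x|) ∧
    ‖matComm (fdH1 n) (fdH2 n V)‖ ≤ 2 * (n : ℝ) * (⨆ x : Set.Icc (0:ℝ) 1, |deriv V x|) ∧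
    ‖matComm (fdH2 n V) (matComm (fdH2 n V) (fdH1 n))‖ ≤
      4 * (n : ℝ) * (⨆ x : Set.Icc (0:ℝ) 1, |V x|) * (⨆ x : Set.Icc (0:ℝ) 1, |deriv V x|) ∧
    ‖matComm (fdH1 n) (matComm (fdH1 n) (fdH2 n V))‖ ≤
      4 * (n : ℝ)^2 * (⨆ x : Set.Icc (0:ℝ) 1, |iteratedDeriv 2 V x|) := by
  haveI : NeZero n := ⟨by omega⟩
  have hnR : (0:ℝ) < n := by
    have : (3:ℝ) ≤ (n:ℝ) := by exact_mod_cast hn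
    linarith
  -- Analytic setup
  obtain ⟨hVd, hVd', hVc', hVc'', hit⟩ := contdiff_facts V hV
  set M := ⨆ x : Set.Icc (0:ℝ) 1, |V x| with hMdef
  set M' := ⨆ x : Set.Icc (0:ℝ) 1, |deriv V x| with hM'def
  set M'' := ⨆ x : Set.Icc (0:ℝ) 1, |iteratedDeriv 2 V x| with hM''def
  have hper' := periodic_deriv V hVper
  have hper'' := periodic_deriv (deriv V) hper'
  have hMg : ∀ x, |V x| ≤ M := periodic_abs_le V hVper hV.continuous
  have hM'g : ∀ x, |deriv V x| ≤ M' := periodic_abs_le _ hper' hVc'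
  have hM''g : ∀ x, |deriv (deriv V) x| ≤ M'' := by
    intro x
    have h1 := periodic_abs_le _ hper'' hVc'' x
    rw [hM''def]
    simp only [hit]
    exact h1
  have hM0 : 0 ≤ M := le_trans (abs_nonneg _) (hMg 0)
  have hM'0 : 0 ≤ M' := le_trans (abs_nonneg _) (hM'g 0)
  have hM''0 : 0 ≤ M'' := le_trans (abs_nonneg _) (hM''g 0)
  have hlip := lip_of_deriv_le V hVd M' hM'g
  have hsec := second_diff_bound V hVd hVd' M'' hM''g
  -- The diagonal entries
  set d : Fin n → ℂ := fun k => ((V (((k : ℕ) : ℝ) / n) : ℝ) : ℂ) with hddef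
  have hH2 : fdH2 n V = Matrix.diagonal d := rfl
  have hVv1 : ∀ k : Fin n, V ((((sig n k : Fin n) : ℕ) : ℝ) / n) = V ((((k:ℕ):ℝ) + 1)/n) := by
    intro k
    rcases Nat.lt_or_ge ((k:ℕ)+1) n with hc | hc
    · have hv : ((sig n k : Fin n) : ℕ) = (k:ℕ)+1 := by
        rw [sig_apply, val_add_one, Nat.mod_eq_of_lt hc]
      rw [hv]
      norm_cast
    · have hkn : (k:ℕ)+1 = n := by have := k.isLt; omega
      have hv : ((sig n k : Fin n) : ℕ) = 0 := by
        rw [sig_apply, val_add_one, hkn, Nat.mod_self]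
      rw [hv]
      have hreal : (((k:ℕ):ℝ) + 1) = (n:ℝ) := by exact_mod_cast hkn
      rw [hreal, div_self (ne_of_gt hnR)]
      have h01 : V 1 = V 0 := by simpa using hVper 0
      simpa using h01.symm
  have hVv2 : ∀ k : Fin n, V (((((sig n).symm k : Fin n) : ℕ) : ℝ) / n) = V ((((k:ℕ):ℝ) - 1)/n) := by
    intro k
    rcases Nat.eq_zero_or_pos (k:ℕ) with hc | hc
    · have hv : (((sig n).symm k : Fin n) : ℕ) = n - 1 := by
        rw [sig_symm_apply, val_sub_one k hn, hc, Nat.zero_add]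
        exact Nat.mod_eq_of_lt (by omega)
      rw [hv, hc]
      simp only [Nat.cast_zero]
      have hreal : ((n - 1 : ℕ) : ℝ) = (n:ℝ) - 1 := by
        have h1 : 1 ≤ n := by omega
        push_cast [h1]
        ring
      rw [hreal]
      have harg : ((n:ℝ) - 1)/n = ((0:ℝ) - 1)/n + 1 := by
        field_simp
        ring
      rw [harg]
      exact hVper _
    · have hv : (((sig n).symm k : Fin n) : ℕ) = (k:ℕ) - 1 := by
        rw [sig_symm_apply, val_sub_one k hn]
        have h2 : (k:ℕ) + n - 1 = ((k:ℕ) - 1) + n := by omega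
        rw [h2, Nat.add_mod_right]
        exact Nat.mod_eq_of_lt (by have := k.isLt; omega)
      rw [hv]
      have hreal : (((k:ℕ) - 1 : ℕ) : ℝ) = ((k:ℕ):ℝ) - 1 := by push_cast [hc]; ring
      rw [hreal]
  have hd1 : ∀ k : Fin n, d (sig n k) = ((V ((((k:ℕ):ℝ) + 1)/(n:ℝ)) : ℝ) : ℂ) := by
    intro k
    simp only [hddef]
    exact congrArg (fun r : ℝ => (r : ℂ)) (hVv1 k)
  have hd2 : ∀ k : Fin n, d ((sig n).symm k) = ((V ((((k:ℕ):ℝ) - 1)/(n:ℝ)) : ℝ) : ℂ) := by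
    intro k
    simp only [hddef]
    exact congrArg (fun r : ℝ => (r : ℂ)) (hVv2 k)
  -- Entry bounds
  have B0 : ∀ k : Fin n, ‖d k‖ ≤ M := by
    intro k
    rw [hddef]
    simp only [Complex.norm_real, Real.norm_eq_abs]
    exact hMg _
  have B1 : ∀ k : Fin n, ‖d k - d (sig n k)‖ ≤ M' / n := by
    intro k
    rw [hd1 k, hddef]
    simp only [← Complex.ofReal_sub, Complex.norm_real, Real.norm_eq_abs]
    calc |V (((k:ℕ):ℝ)/n) - V ((((k:ℕ):ℝ) + 1)/n)|
        ≤ M' * |((k:ℕ):ℝ)/n - (((k:ℕ):ℝ) + 1)/n| := hlip _ _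
      _ = M' / n := by
          rw [show ((k:ℕ):ℝ)/n - (((k:ℕ):ℝ) + 1)/n = -(1/n) by first | (field_simp; ring1) | field_simp | ring1]
          rw [abs_neg, abs_of_pos (by positivity)]
          ring
  have B2 : ∀ k : Fin n, ‖d k - d ((sig n).symm k)‖ ≤ M' / n := by
    intro k
    rw [hd2 k, hddef]
    simp only [← Complex.ofReal_sub, Complex.norm_real, Real.norm_eq_abs]
    calc |V (((k:ℕ):ℝ)/n) - V ((((k:ℕ):ℝ) - 1)/n)|
        ≤ M' * |((k:ℕ):ℝ)/n - (((k:ℕ):ℝ) - 1)/n| := hlip _ _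
      _ = M' / n := by
          rw [show ((k:ℕ):ℝ)/n - (((k:ℕ):ℝ) - 1)/n = 1/n by first | (field_simp; ring1) | field_simp | ring1]
          rw [abs_of_pos (by positivity)]
          ring
  have B1' : ∀ k : Fin n, ‖d k - d (sig n k)‖ ≤ 2 * M := by
    intro k
    calc ‖d k - d (sig n k)‖ ≤ ‖d k‖ + ‖d (sig n k)‖ := norm_sub_le _ _
      _ ≤ M + M := add_le_add (B0 k) (B0 _)
      _ = 2 * M := by ring
  have B2' : ∀ k : Fin n, ‖d k - d ((sig n).symm k)‖ ≤ 2 * M := by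
    intro k
    calc ‖d k - d ((sig n).symm k)‖ ≤ ‖d k‖ + ‖d ((sig n).symm k)‖ := norm_sub_le _ _
      _ ≤ M + M := add_le_add (B0 k) (B0 _)
      _ = 2 * M := by ring
  have Bsec : ∀ k : Fin n, ‖d (sig n k) - 2 * d k + d ((sig n).symm k)‖ ≤ M'' / (n:ℝ)^2 := by
    intro k
    rw [hd1 k, hd2 k, hddef]
    have hx1 : (((k:ℕ):ℝ) + 1)/n = ((k:ℕ):ℝ)/n + 1/n := by ring
    have hx2 : (((k:ℕ):ℝ) - 1)/n = ((k:ℕ):ℝ)/n - 1/n := by ring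
    rw [hx1, hx2]
    have hcast : ((V (((k:ℕ):ℝ)/n + 1/n) : ℝ) : ℂ) - 2 * ((V (((k:ℕ):ℝ)/n) : ℝ) : ℂ)
        + ((V (((k:ℕ):ℝ)/n - 1/n) : ℝ) : ℂ)
        = ((V (((k:ℕ):ℝ)/n + 1/n) - 2 * V (((k:ℕ):ℝ)/n) + V (((k:ℕ):ℝ)/n - 1/n) : ℝ) : ℂ) := by
      push_cast
      ring
    rw [hcast]
    simp only [Complex.norm_real, Real.norm_eq_abs]
    calc |V (((k:ℕ):ℝ)/n + 1/n) - 2 * V (((k:ℕ):ℝ)/n) + V (((k:ℕ):ℝ)/n - 1/n)|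
        ≤ M'' * (1/n)^2 := hsec _ _ (by positivity)
      _ = M'' / (n:ℝ)^2 := by first | (field_simp; ring1) | field_simp | ring1
  -- norms of scalars
  have hbn : ‖(n:ℂ)^2‖ = (n:ℝ)^2 := by
    rw [norm_pow, Complex.norm_natCast]
  have hone : ‖(1 : Mat n)‖ = 1 := CStarRing.norm_one
  -- ① fdH1
  have goal1 : ‖fdH1 n‖ ≤ 4 * (n : ℝ)^2 := by
    rw [fdH1_eq hn]
    calc ‖(2 * (n : ℂ)^2) • (1 : Mat n) - (n : ℂ)^2 • pm (sig n) - (n : ℂ)^2 • pm (sig n).symm‖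
        ≤ ‖(2 * (n : ℂ)^2) • (1 : Mat n) - (n : ℂ)^2 • pm (sig n)‖
          + ‖(n : ℂ)^2 • pm (sig n).symm‖ := norm_sub_le _ _
      _ ≤ ‖(2 * (n : ℂ)^2) • (1 : Mat n)‖ + ‖(n : ℂ)^2 • pm (sig n)‖
          + ‖(n : ℂ)^2 • pm (sig n).symm‖ := by
            gcongr
            exact norm_sub_le _ _
      _ = 2 * (n:ℝ)^2 + (n:ℝ)^2 + (n:ℝ)^2 := by
            rw [norm_smul, norm_smul, norm_smul, hone, norm_pm, norm_pm, norm_mul, hbn]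
            simp
      _ = 4 * (n:ℝ)^2 := by ring
  -- ② fdD1
  have goal2 : ‖fdD1 n‖ ≤ 2 * (n : ℝ) := by
    rw [fdD1_eq hn]
    calc ‖(-(n : ℂ)) • (1 : Mat n) + (n : ℂ) • pm (sig n).symm‖
        ≤ ‖(-(n : ℂ)) • (1 : Mat n)‖ + ‖(n : ℂ) • pm (sig n).symm‖ := norm_add_le _ _
      _ = (n:ℝ) + (n:ℝ) := by
            rw [norm_smul, norm_smul, hone, norm_pm, norm_neg, Complex.norm_natCast]
            simp
      _ = 2 * (n:ℝ) := by ring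
  -- ③ fdH2
  have goal3 : ‖fdH2 n V‖ ≤ M := by
    rw [hH2]
    exact l2_norm_diagonal_le d M hM0 B0
  -- ④ [H1, H2]
  have hX : matComm (fdH1 n) (Matrix.diagonal d) =
      (n:ℂ)^2 • (Matrix.diagonal (fun k => d k - d (sig n k)) * pm (sig n)) +
      (n:ℂ)^2 • (Matrix.diagonal (fun k => d k - d ((sig n).symm k)) * pm (sig n).symm) :=
    commH1diag hn d
  have goal4 : ‖matComm (fdH1 n) (fdH2 n V)‖ ≤ 2 * (n:ℝ) * M' := by
    rw [hH2, hX]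
    calc ‖(n:ℂ)^2 • (Matrix.diagonal (fun k => d k - d (sig n k)) * pm (sig n)) +
          (n:ℂ)^2 • (Matrix.diagonal (fun k => d k - d ((sig n).symm k)) * pm (sig n).symm)‖
        ≤ ‖(n:ℂ)^2 • (Matrix.diagonal (fun k => d k - d (sig n k)) * pm (sig n))‖ +
          ‖(n:ℂ)^2 • (Matrix.diagonal (fun k => d k - d ((sig n).symm k)) * pm (sig n).symm)‖ :=
            norm_add_le _ _
      _ ≤ ‖(n:ℂ)^2‖ * (M'/n) + ‖(n:ℂ)^2‖ * (M'/n) :=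
            add_le_add
              (norm_term_le _ _ _ _ (by positivity) B1)
              (norm_term_le _ _ _ _ (by positivity) B2)
      _ = 2 * (n:ℝ) * M' := by rw [hbn]; first | (field_simp; ring1) | field_simp | ring1
  -- ⑤ [H2, [H2, H1]]
  have hXD : matComm (Matrix.diagonal d) (matComm (Matrix.diagonal d) (fdH1 n))
      = -((n:ℂ)^2 • (Matrix.diagonal
            (fun k => (d k - d (sig n k)) * (d k - d (sig n k))) * pm (sig n)) +
          (n:ℂ)^2 • (Matrix.diagonal
            (fun k => (d k - d ((sig n).symm k)) * (d k - d ((sig n).symm k))) * pm (sig n).symm)) := by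
    rw [show matComm (Matrix.diagonal d) (fdH1 n) = -matComm (fdH1 n) (Matrix.diagonal d) from
      matComm_antisymm _ _]
    rw [matComm_neg_right, hX, matComm_add_right, matComm_smul_right, matComm_smul_right,
      comm_diag_diagpm d _ (sig n), comm_diag_diagpm d _ (sig n).symm]
  have goal5 : ‖matComm (fdH2 n V) (matComm (fdH2 n V) (fdH1 n))‖ ≤ 4 * (n:ℝ) * M * M' := by
    rw [hH2, hXD, norm_neg]
    have e1 : ∀ k : Fin n, ‖(d k - d (sig n k)) * (d k - d (sig n k))‖ ≤ (M'/n) * (2*M) := by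
      intro k
      rw [norm_mul]
      exact mul_le_mul (B1 k) (B1' k) (norm_nonneg _) (by positivity)
    have e2 : ∀ k : Fin n, ‖(d k - d ((sig n).symm k)) * (d k - d ((sig n).symm k))‖
        ≤ (M'/n) * (2*M) := by
      intro k
      rw [norm_mul]
      exact mul_le_mul (B2 k) (B2' k) (norm_nonneg _) (by positivity)
    calc ‖(n:ℂ)^2 • (Matrix.diagonal
            (fun k => (d k - d (sig n k)) * (d k - d (sig n k))) * pm (sig n)) +
          (n:ℂ)^2 • (Matrix.diagonal
            (fun k => (d k - d ((sig n).symm k)) * (d k - d ((sig n).symm k))) * pm (sig n).symm)‖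
        ≤ ‖(n:ℂ)^2‖ * ((M'/n) * (2*M)) + ‖(n:ℂ)^2‖ * ((M'/n) * (2*M)) := by
            refine le_trans (norm_add_le _ _) (add_le_add ?_ ?_)
            · exact norm_term_le _ _ _ _ (by positivity) e1
            · exact norm_term_le _ _ _ _ (by positivity) e2
      _ = 4 * (n:ℝ) * M * M' := by rw [hbn]; first | (field_simp; ring1) | field_simp | ring1
  -- ⑥ [H1, [H1, H2]]
  have hcomm2 : pm (n := n) (sig n) * pm (sig n).symm = pm (sig n).symm * pm (sig n) := by
    rw [pm_mul_pm, pm_mul_pm, Equiv.self_trans_symm, Equiv.symm_trans_self]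
  have hXX : matComm (fdH1 n) (matComm (fdH1 n) (Matrix.diagonal d))
      = (0 : Mat n)
        - (n:ℂ)^2 • ((n:ℂ)^2 • (Matrix.diagonal
              (fun k => (d (sig n k) - d (sig n (sig n k))) - (d k - d (sig n k)))
              * pm ((sig n).trans (sig n))) +
            (n:ℂ)^2 • (Matrix.diagonal
              (fun k => (d (sig n k) - d ((sig n).symm (sig n k))) - (d k - d ((sig n).symm k)))
              * pm ((sig n).trans (sig n).symm)))
        - (n:ℂ)^2 • ((n:ℂ)^2 • (Matrix.diagonal
              (fun k => (d ((sig n).symm k) - d (sig n ((sig n).symm k))) - (d k - d (sig n k)))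
              * pm ((sig n).symm.trans (sig n))) +
            (n:ℂ)^2 • (Matrix.diagonal
              (fun k => (d ((sig n).symm k) - d ((sig n).symm ((sig n).symm k)))
                - (d k - d ((sig n).symm k)))
              * pm ((sig n).symm.trans (sig n).symm))) := by
    rw [hX, fdH1_eq hn, matComm_sub_left, matComm_sub_left, matComm_smul_one_left,
      matComm_smul_left, matComm_smul_left,
      matComm_add_right (pm (sig n)), matComm_smul_right, matComm_smul_right,
      matComm_add_right (pm (sig n).symm), matComm_smul_right, matComm_smul_right,
      comm_pm_diagpm (sig n) (sig n) _ rfl,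
      comm_pm_diagpm (sig n) (sig n).symm _ hcomm2,
      comm_pm_diagpm (sig n).symm (sig n) _ hcomm2.symm,
      comm_pm_diagpm (sig n).symm (sig n).symm _ rfl,
      pm_mul_pm, pm_mul_pm, pm_mul_pm, pm_mul_pm]
  -- second-difference entry bounds for the four diagonals
  have t1 : ∀ k : Fin n, ‖(d (sig n k) - d (sig n (sig n k))) - (d k - d (sig n k))‖
      ≤ M'' / (n:ℝ)^2 := by
    intro k
    have he : (d (sig n k) - d (sig n (sig n k))) - (d k - d (sig n k))
        = -(d (sig n (sig n k)) - 2 * d (sig n k) + d ((sig n).symm (sig n k))) := by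
      rw [Equiv.symm_apply_apply]
      ring
    rw [he, norm_neg]
    exact Bsec (sig n k)
  have t2 : ∀ k : Fin n, ‖(d (sig n k) - d ((sig n).symm (sig n k))) - (d k - d ((sig n).symm k))‖
      ≤ M'' / (n:ℝ)^2 := by
    intro k
    have he : (d (sig n k) - d ((sig n).symm (sig n k))) - (d k - d ((sig n).symm k))
        = d (sig n k) - 2 * d k + d ((sig n).symm k) := by
      rw [Equiv.symm_apply_apply]
      ring
    rw [he]
    exact Bsec k
  have t3 : ∀ k : Fin n, ‖(d ((sig n).symm k) - d (sig n ((sig n).symm k))) - (d k - d (sig n k))‖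
      ≤ M'' / (n:ℝ)^2 := by
    intro k
    have he : (d ((sig n).symm k) - d (sig n ((sig n).symm k))) - (d k - d (sig n k))
        = d (sig n k) - 2 * d k + d ((sig n).symm k) := by
      rw [Equiv.apply_symm_apply]
      ring
    rw [he]
    exact Bsec k
  have t4 : ∀ k : Fin n,
      ‖(d ((sig n).symm k) - d ((sig n).symm ((sig n).symm k))) - (d k - d ((sig n).symm k))‖
      ≤ M'' / (n:ℝ)^2 := by
    intro k
    have he : (d ((sig n).symm k) - d ((sig n).symm ((sig n).symm k))) - (d k - d ((sig n).symm k))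
        = -(d (sig n ((sig n).symm k)) - 2 * d ((sig n).symm k) + d ((sig n).symm ((sig n).symm k))) := by
      rw [Equiv.apply_symm_apply]
      ring
    rw [he, norm_neg]
    exact Bsec ((sig n).symm k)
  have goal6 : ‖matComm (fdH1 n) (matComm (fdH1 n) (fdH2 n V))‖ ≤ 4 * (n:ℝ)^2 * M'' := by
    rw [hH2, hXX]
    have hpart : ∀ (u v : Fin n → ℂ) (e f : Equiv.Perm (Fin n)),
        (∀ k, ‖u k‖ ≤ M'' / (n:ℝ)^2) → (∀ k, ‖v k‖ ≤ M'' / (n:ℝ)^2) →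
        ‖(n:ℂ)^2 • ((n:ℂ)^2 • (Matrix.diagonal u * pm e) + (n:ℂ)^2 • (Matrix.diagonal v * pm f))‖
          ≤ (n:ℝ)^2 * ((n:ℝ)^2 * (M''/(n:ℝ)^2) + (n:ℝ)^2 * (M''/(n:ℝ)^2)) := by
      intro u v e f hu hv
      rw [norm_smul, hbn]
      refine mul_le_mul_of_nonneg_left ?_ (by positivity)
      refine le_trans (norm_add_le _ _) (add_le_add ?_ ?_)
      · exact le_trans (norm_term_le _ _ _ _ (by positivity) hu) (by rw [hbn])
      · exact le_trans (norm_term_le _ _ _ _ (by positivity) hv) (by rw [hbn])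
    calc ‖(0 : Mat n) - _ - _‖
        ≤ ‖(0 : Mat n) - _‖ + ‖_‖ := norm_sub_le _ _
      _ ≤ ‖(0 : Mat n)‖ + ‖_‖ + ‖_‖ := by gcongr; exact norm_sub_le _ _
      _ ≤ 0 + (n:ℝ)^2 * ((n:ℝ)^2 * (M''/(n:ℝ)^2) + (n:ℝ)^2 * (M''/(n:ℝ)^2))
            + (n:ℝ)^2 * ((n:ℝ)^2 * (M''/(n:ℝ)^2) + (n:ℝ)^2 * (M''/(n:ℝ)^2)) := by
          refine add_le_add (add_le_add (le_of_eq norm_zero) ?_) ?_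
          · exact hpart _ _ _ _ t1 t2
          · exact hpart _ _ _ _ t3 t4
      _ = 4 * (n:ℝ)^2 * M'' := by first | (field_simp; ring1) | field_simp | ring1
  exact ⟨goal1, goal2, goal3, goal4, goal5, goal6⟩
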